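/- arXiv:2003.03563 — 7 statements merged into one kernel-verified Lean document; each statement's English description precedes it below -/
import Mathlib

section
/- Let f > 0, c₁, c₂ ∈ ℝ, and set k = √(f/(f+1)). Define φ₀(t) = t − arctan(k·tan((2c₁+t)/k)) and Ω₀(t) = c₂·(cos(2(2c₁+t)/k) + 2f + 1). Then at every real t with cos((2c₁+t)/k) ≠ 0, the functions Ω₀ and φ₀ are differentiable and satisfy Ω₀'(t) = −Ω₀(t)·sin(2(t−φ₀(t)))/f and φ₀'(t) = −sin²(t−φ₀(t))/f. -/
open Real

/-- Proposition 1 (unperturbed problem `P(0)`): the explicit two-parameter family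
`Ω₀(t) = c₂(cos(2(2c₁+t)/k) + 2f + 1)`, `φ₀(t) = t − arctan(k tan((2c₁+t)/k))`,
with `k = √(f/(f+1))`, solves `Ω₀' = −Ω₀ sin(2(t−φ₀))/f`, `φ₀' = −sin²(t−φ₀)/f`
at every `t` where `cos((2c₁+t)/k) ≠ 0`. -/
theorem stmt0 (f c₁ c₂ : ℝ) (hf : 0 < f)
    (k : ℝ) (hk : k = Real.sqrt (f / (f + 1)))
    (φ₀ Ω₀ : ℝ → ℝ)
    (hφ₀ : ∀ t, φ₀ t = t - Real.arctan (k * Real.tan ((2 * c₁ + t) / k)))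
    (hΩ₀ : ∀ t, Ω₀ t = c₂ * (Real.cos (2 * (2 * c₁ + t) / k) + 2 * f + 1))
    (t : ℝ) (ht : Real.cos ((2 * c₁ + t) / k) ≠ 0) :
    HasDerivAt Ω₀ (-(Ω₀ t) * Real.sin (2 * (t - φ₀ t)) / f) t ∧
    HasDerivAt φ₀ (-(Real.sin (t - φ₀ t)) ^ 2 / f) t := by
  have hf1 : (0:ℝ) < f + 1 := by linarith
  have hkpos : 0 < k := by
    rw [hk]; exact Real.sqrt_pos.mpr (by positivity)
  have hk2 : k ^ 2 * (f + 1) = f := by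
    rw [hk, Real.sq_sqrt (by positivity)]; field_simp
  set u := (2 * c₁ + t) / k with hu
  set S := Real.sin u with hS
  set C := Real.cos u with hC
  have hSC : S ^ 2 + C ^ 2 = 1 := Real.sin_sq_add_cos_sq u
  set x := k * Real.tan u with hx
  have hxx : 1 + x ^ 2 = (C ^ 2 + k ^ 2 * S ^ 2) / C ^ 2 := by
    rw [hx, Real.tan_eq_sin_div_cos, ← hS, ← hC]
    field_simp
  have hxpos : 0 < 1 + x ^ 2 := by positivity
  have hsq : Real.sqrt (1 + x ^ 2) ^ 2 = 1 + x ^ 2 := Real.sq_sqrt hxpos.le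
  have hsqpos : 0 < Real.sqrt (1 + x ^ 2) := Real.sqrt_pos.mpr hxpos
  -- rewrite t - φ₀ t
  have hphi : t - φ₀ t = Real.arctan x := by rw [hφ₀]; ring
  -- derivative of inner u(t)
  have hdu : HasDerivAt (fun s => (2 * c₁ + s) / k) (1 / k) t := by
    simpa using ((hasDerivAt_id t).const_add (2 * c₁)).div_const k
  have hdtan : HasDerivAt (fun s => Real.tan ((2 * c₁ + s) / k)) (1 / C ^ 2 * (1 / k)) t :=
    by rw [hC, hu]; exact (Real.hasDerivAt_tan (by rwa [hC, hu] at ht)).comp t hdu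
  have hdarctan : HasDerivAt (fun s => Real.arctan (k * Real.tan ((2 * c₁ + s) / k)))
      (1 / (1 + x ^ 2) * (k * (1 / C ^ 2 * (1 / k)))) t :=
    by rw [hx, hu]; exact (Real.hasDerivAt_arctan _).comp t (hdtan.const_mul k)
  have hdφ : HasDerivAt φ₀ (1 - 1 / (1 + x ^ 2) * (k * (1 / C ^ 2 * (1 / k)))) t := by
    have : HasDerivAt (fun s => s - Real.arctan (k * Real.tan ((2 * c₁ + s) / k)))
        (1 - 1 / (1 + x ^ 2) * (k * (1 / C ^ 2 * (1 / k)))) t :=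
      (hasDerivAt_id t).sub hdarctan
    exact this.congr_of_eventuallyEq (Filter.Eventually.of_forall fun s => (hφ₀ s))
  have hdu2 : HasDerivAt (fun s => 2 * (2 * c₁ + s) / k) (2 / k) t := by
    simpa using (((hasDerivAt_id t).const_add (2 * c₁)).const_mul 2).div_const k
  have hdΩ : HasDerivAt Ω₀ (c₂ * (-Real.sin (2 * (2 * c₁ + t) / k) * (2 / k))) t := by
    have h1 : HasDerivAt (fun s => Real.cos (2 * (2 * c₁ + s) / k))
        (-Real.sin (2 * (2 * c₁ + t) / k) * (2 / k)) t :=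
      (Real.hasDerivAt_cos _).comp t hdu2
    have : HasDerivAt (fun s => c₂ * (Real.cos (2 * (2 * c₁ + s) / k) + 2 * f + 1))
        (c₂ * (-Real.sin (2 * (2 * c₁ + t) / k) * (2 / k))) t := by
      exact ((h1.add_const (2 * f)).add_const 1).const_mul c₂
    exact this.congr_of_eventuallyEq (Filter.Eventually.of_forall fun s => (hΩ₀ s))
  have hsin2u : Real.sin (2 * (2 * c₁ + t) / k) = 2 * S * C := by
    rw [mul_div_assoc, ← hu, Real.sin_two_mul, ← hS, ← hC]
  have hcos2u : Real.cos (2 * (2 * c₁ + t) / k) = 2 * C ^ 2 - 1 := by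
    rw [mul_div_assoc, ← hu, Real.cos_two_mul, ← hC]
  have hsinφ : Real.sin (t - φ₀ t) = x / Real.sqrt (1 + x ^ 2) := by
    rw [hphi, Real.sin_arctan]
  have hsin2φ : Real.sin (2 * (t - φ₀ t)) = 2 * x / (1 + x ^ 2) := by
    rw [Real.sin_two_mul, hphi, Real.sin_arctan, Real.cos_arctan]
    rw [eq_div_iff hxpos.ne', ← Real.mul_self_sqrt hxpos.le]
    field_simp
    simp only [hsq]
  have hD : C ^ 2 + k ^ 2 * S ^ 2 ≠ 0 := by
    intro h
    rw [hxx, h] at hxpos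
    simp at hxpos
  constructor
  · have heq : c₂ * (-Real.sin (2 * (2 * c₁ + t) / k) * (2 / k)) =
        -(Ω₀ t) * Real.sin (2 * (t - φ₀ t)) / f := by
      rw [hsin2u, hsin2φ, hΩ₀, hcos2u, hx, Real.tan_eq_sin_div_cos, ← hS, ← hC,
        show 1 + (k * (S / C)) ^ 2 = (C ^ 2 + k ^ 2 * S ^ 2) / C ^ 2 by field_simp]
      field_simp
      ring_nf
      linear_combination (4*c₂*S*C^2*f*k^2 + 2*c₂*S*(-2*f*C^2*k^2 - f*k^2))*hSC + (2*c₂*S*(C^2+2*C^4) - 4*c₂*S*C^4)*hk2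
    rw [← heq]; exact hdΩ
  · have heq : 1 - 1 / (1 + x ^ 2) * (k * (1 / C ^ 2 * (1 / k))) =
        -(Real.sin (t - φ₀ t)) ^ 2 / f := by
      rw [hsinφ, div_pow, hsq, hxx, hx, Real.tan_eq_sin_div_cos, ← hS, ← hC]
      field_simp
      ring_nf
      linear_combination (k*C^2*(k^2*S^2*f + C^2*f) + f - k*(C^2*f*k^2*S^2 + C^4*f))*hSC + (k*C^2*(k^2*S^4 + C^2*S^2) + S^2 - k*(C^2*k^2*S^4 + C^4*S^2))*hk2
    rw [← heq]; exact hdφ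
end

section
/- Let f > 0, c₁, c₃ ∈ ℝ, and set k = √(f/(f+1)). Define φ₀(t) = t − arctan(k·tan((2c₁+t)/k)) and φ₁(t) = (1/2)·[ (2c₃ − 3f(2f+1)) / (cos(2(2c₁+t)/k) + 2f + 1) + 3f ]. Then at every real t with cos((2c₁+t)/k) ≠ 0, φ₁ is differentiable and satisfies φ₁'(t) = (2φ₁(t) − 3f)·sin(2(t−φ₀(t)))/(2f). -/
open Real

/-- First-order phase correction of Proposition 2: with `k = √(f/(f+1))`,
`φ₀(t) = t − arctan(k tan((2c₁+t)/k))` and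
`φ₁(t) = ((2c₃ − 3f(2f+1))/(cos(2(2c₁+t)/k) + 2f + 1) + 3f)/2`,
the function `φ₁` satisfies `φ₁' = (2φ₁ − 3f) sin(2(t−φ₀))/(2f)` at every `t`
where `cos((2c₁+t)/k) ≠ 0`. -/
theorem stmt1 (f c₁ c₃ : ℝ) (hf : 0 < f)
    (k : ℝ) (hk : k = Real.sqrt (f / (f + 1)))
    (φ₀ φ₁ : ℝ → ℝ)
    (hφ₀ : ∀ t, φ₀ t = t - Real.arctan (k * Real.tan ((2 * c₁ + t) / k)))
    (hφ₁ : ∀ t, φ₁ t = (1 / 2) *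
      ((2 * c₃ - 3 * f * (2 * f + 1)) / (Real.cos (2 * (2 * c₁ + t) / k) + 2 * f + 1) + 3 * f))
    (t : ℝ) (ht : Real.cos ((2 * c₁ + t) / k) ≠ 0) :
    HasDerivAt φ₁ ((2 * φ₁ t - 3 * f) * Real.sin (2 * (t - φ₀ t)) / (2 * f)) t := by
  have hφ₁' : φ₁ = fun t => (1 / 2) *
      ((2 * c₃ - 3 * f * (2 * f + 1)) / (Real.cos (2 * (2 * c₁ + t) / k) + 2 * f + 1) + 3 * f) :=
    funext hφ₁
  subst hφ₁'
  set A := 2 * c₃ - 3 * f * (2 * f + 1) with hA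
  have hf1 : (0:ℝ) < f + 1 := by linarith
  have hk0 : 0 < k := by
    rw [hk]; exact Real.sqrt_pos.mpr (div_pos hf hf1)
  have hk2 : k ^ 2 = f / (f + 1) := by
    rw [hk, sq_sqrt (le_of_lt (div_pos hf hf1))]
  have hkk : k ^ 2 * (f + 1) = f := by
    rw [hk2]; field_simp
  set u := (2 * c₁ + t) / k with hu
  have h2u : ∀ s, 2 * (2 * c₁ + s) / k = 2 * ((2 * c₁ + s) / k) := fun s => by ring
  have hcos2 : Real.cos (2 * (2 * c₁ + t) / k) = 2 * Real.cos u ^ 2 - 1 := by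
    rw [h2u, Real.cos_two_mul]
  have hD : Real.cos (2 * (2 * c₁ + t) / k) + 2 * f + 1 = 2 * (Real.cos u ^ 2 + f) := by
    rw [hcos2]; ring
  have hcospos : 0 < Real.cos u ^ 2 + f := by positivity
  have hDne : Real.cos (2 * (2 * c₁ + t) / k) + 2 * f + 1 ≠ 0 := by
    rw [hD]; positivity
  -- derivative construction
  have h1 : HasDerivAt (fun s => 2 * (2 * c₁ + s) / k) (2 / k) t := by
    have := (((hasDerivAt_id t).const_add (2 * c₁)).const_mul 2).div_const k
    simpa using this
  have h2 : HasDerivAt (fun s => Real.cos (2 * (2 * c₁ + s) / k))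
      (-Real.sin (2 * (2 * c₁ + t) / k) * (2 / k)) t := by
    have h := (Real.hasDerivAt_cos (2 * (2 * c₁ + t) / k)).comp t h1
    exact h.congr_deriv (by ring)
  have h3 : HasDerivAt (fun s => Real.cos (2 * (2 * c₁ + s) / k) + 2 * f + 1)
      (-Real.sin (2 * (2 * c₁ + t) / k) * (2 / k)) t :=
    (h2.add_const (2 * f)).add_const 1
  have h4 : HasDerivAt (fun s => A / (Real.cos (2 * (2 * c₁ + s) / k) + 2 * f + 1))
      ((0 * (Real.cos (2 * (2 * c₁ + t) / k) + 2 * f + 1)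
        - A * (-Real.sin (2 * (2 * c₁ + t) / k) * (2 / k)))
        / (Real.cos (2 * (2 * c₁ + t) / k) + 2 * f + 1) ^ 2) t :=
    (hasDerivAt_const t A).div h3 hDne
  have h5 := ((h4.add_const (3 * f)).const_mul (1 / 2))
  refine h5.congr_deriv ?_
  symm
  -- now equality of derivative values
  rw [hφ₁ t, hφ₀ t]
  have hsub : t - (t - Real.arctan (k * Real.tan u)) = Real.arctan (k * Real.tan u) := by ring
  rw [hsub]
  set x := k * Real.tan u with hx
  have hsin2 : Real.sin (2 * Real.arctan x) = 2 * (x / Real.sqrt (1 + x ^ 2)) * (1 / Real.sqrt (1 + x ^ 2)) := by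
    rw [Real.sin_two_mul, Real.sin_arctan, Real.cos_arctan]
  have hs0 : (0:ℝ) < Real.sqrt (1 + x ^ 2) := Real.sqrt_pos.mpr (by positivity)
  have hssq : Real.sqrt (1 + x ^ 2) ^ 2 = 1 + x ^ 2 := Real.sq_sqrt (by positivity)
  have hsin2' : Real.sin (2 * Real.arctan x) = 2 * x / (1 + x ^ 2) := by
    rw [hsin2, ← hssq]
    field_simp
    rw [Real.sqrt_sq hs0.le]
  rw [hsin2']
  have hsin2u : Real.sin (2 * (2 * c₁ + t) / k) = 2 * Real.sin u * Real.cos u := by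
    rw [h2u, Real.sin_two_mul]
  rw [hsin2u, hcos2, hx, Real.tan_eq_sin_div_cos]
  have hpyth : Real.sin u ^ 2 + Real.cos u ^ 2 = 1 := Real.sin_sq_add_cos_sq u
  have h1x : 1 + (k * (Real.sin u / Real.cos u)) ^ 2 =
      (Real.cos u ^ 2 + k ^ 2 * Real.sin u ^ 2) / Real.cos u ^ 2 := by
    field_simp
  have hnum : Real.cos u ^ 2 + k ^ 2 * Real.sin u ^ 2 = (Real.cos u ^ 2 + f) / (f + 1) := by
    have : k ^ 2 * Real.sin u ^ 2 = k ^ 2 * (1 - Real.cos u ^ 2) := by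
      rw [← hpyth]; ring
    rw [this, hk2]; field_simp; ring
  rw [h1x, hnum]
  have hDD : 2 * Real.cos u ^ 2 - 1 + 2 * f + 1 = 2 * (Real.cos u ^ 2 + f) := by ring
  rw [hDD]
  have hkne : k ≠ 0 := ne_of_gt hk0
  have hfne : f ≠ 0 := ne_of_gt hf
  have hf1ne : (f:ℝ) + 1 ≠ 0 := ne_of_gt hf1
  have hcfne : Real.cos u ^ 2 + f ≠ 0 := ne_of_gt hcospos
  field_simp
  linear_combination (2 * A * Real.cos u * Real.sin u) * hkk
end

section
/- Let f > 0 and let c : ℝ → ℝ be differentiable. Define g : ℝ × ℝ → ℝ by g(t, φ) = 3f/2 + exp( −cos(2(t−φ))/(2f+1) )·c(t/(2f) + φ). Then g is differentiable and satisfies −2f·∂g/∂t (t,φ) − 3f·sin(2(t−φ)) + 2·g(t,φ)·sin(2(t−φ)) + ∂g/∂φ (t,φ) = 0 for all (t, φ) ∈ ℝ². -/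
/-- Third solvability lemma of Proposition 3: any
`g(t, φ) = 3f/2 + exp(−cos(2(t−φ))/(2f+1))·c(t/(2f) + φ)` with `c` differentiable solves the
linear PDE `−2f·g_t − 3f·sin(2(t−φ)) + 2g·sin(2(t−φ)) + g_φ = 0`. -/
theorem stmt5 (f : ℝ) (hf : 0 < f) (c : ℝ → ℝ) (hc : Differentiable ℝ c)
    (g : ℝ × ℝ → ℝ)
    (hg : ∀ p : ℝ × ℝ, g p = 3 * f / 2 +
      Real.exp (-Real.cos (2 * (p.1 - p.2)) / (2 * f + 1)) * c (p.1 / (2 * f) + p.2)) :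
    Differentiable ℝ g ∧
    ∀ t φ : ℝ,
      -(2 * f) * deriv (fun t' => g (t', φ)) t - 3 * f * Real.sin (2 * (t - φ)) +
        2 * g (t, φ) * Real.sin (2 * (t - φ)) + deriv (fun φ' => g (t, φ')) φ = 0 := by
  have hgf : g = fun p : ℝ × ℝ => 3 * f / 2 +
      Real.exp (-Real.cos (2 * (p.1 - p.2)) / (2 * f + 1)) * c (p.1 / (2 * f) + p.2) :=
    funext hg
  subst hgf
  have hf2 : (2 * f) ≠ 0 := by positivity
  have hf1 : (2 * f + 1) ≠ 0 := by positivity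
  constructor
  · fun_prop
  intro t φ
  -- derivative in t
  have h1 : HasDerivAt (fun t' : ℝ => -Real.cos (2 * (t' - φ)) / (2 * f + 1))
      (2 * Real.sin (2 * (t - φ)) / (2 * f + 1)) t := by
    have h : HasDerivAt (fun t' : ℝ => 2 * (t' - φ)) 2 t := by
      simpa using ((hasDerivAt_id t).sub_const φ).const_mul 2
    have := (h.cos).neg.div_const (2 * f + 1)
    exact this.congr_deriv (by ring)
  have h2 : HasDerivAt (fun t' : ℝ => c (t' / (2 * f) + φ))
      (deriv c (t / (2 * f) + φ) * (1 / (2 * f))) t := by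
    have h : HasDerivAt (fun t' : ℝ => t' / (2 * f) + φ) (1 / (2 * f)) t := by
      simpa using ((hasDerivAt_id t).div_const (2 * f)).add_const φ
    exact ((hc (t / (2 * f) + φ)).hasDerivAt).comp t h
  have ht : HasDerivAt (fun t' : ℝ => 3 * f / 2 +
      Real.exp (-Real.cos (2 * (t' - φ)) / (2 * f + 1)) * c (t' / (2 * f) + φ))
      (Real.exp (-Real.cos (2 * (t - φ)) / (2 * f + 1)) * (2 * Real.sin (2 * (t - φ)) / (2 * f + 1)) * c (t / (2 * f) + φ)
        + Real.exp (-Real.cos (2 * (t - φ)) / (2 * f + 1)) * (deriv c (t / (2 * f) + φ) * (1 / (2 * f)))) t := by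
    exact ((h1.exp).mul h2).const_add (3 * f / 2)
  -- derivative in φ
  have h3 : HasDerivAt (fun φ' : ℝ => -Real.cos (2 * (t - φ')) / (2 * f + 1))
      (-(2 * Real.sin (2 * (t - φ))) / (2 * f + 1)) φ := by
    have h : HasDerivAt (fun φ' : ℝ => 2 * (t - φ')) (-2) φ := by
      simpa using ((hasDerivAt_id φ).const_sub t).const_mul 2
    have := (h.cos).neg.div_const (2 * f + 1)
    exact this.congr_deriv (by ring)
  have h4 : HasDerivAt (fun φ' : ℝ => c (t / (2 * f) + φ'))
      (deriv c (t / (2 * f) + φ) * 1) φ := by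
    have h : HasDerivAt (fun φ' : ℝ => t / (2 * f) + φ') 1 φ := by
      simpa using (hasDerivAt_id φ).const_add (t / (2 * f))
    exact ((hc (t / (2 * f) + φ)).hasDerivAt).comp φ h
  have hφ : HasDerivAt (fun φ' : ℝ => 3 * f / 2 +
      Real.exp (-Real.cos (2 * (t - φ')) / (2 * f + 1)) * c (t / (2 * f) + φ'))
      (Real.exp (-Real.cos (2 * (t - φ)) / (2 * f + 1)) * (-(2 * Real.sin (2 * (t - φ))) / (2 * f + 1)) * c (t / (2 * f) + φ)
        + Real.exp (-Real.cos (2 * (t - φ)) / (2 * f + 1)) * (deriv c (t / (2 * f) + φ) * 1)) φ :=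
    (((h3.exp).mul h4).const_add (3 * f / 2))
  simp only
  rw [ht.deriv, hφ.deriv]
  field_simp
  ring
end

section
/- Fix γ ∈ ℝ and define F : ℝ³ → ℝ³ by F(Ω, Ωm, Ωk) = ( Ω·(3γΩm + 3Ω + 2Ωk − 3), Ωm·(3γ(Ωm−1) + 3Ω + 2Ωk), Ωk·(3γΩm + 3Ω + 2Ωk − 2) ). Then F(P) = 0 for P₁ = (0,1,0), P₂ = (0,0,1), P₃ = (0,0,0), P₄ = (1,0,0), and the characteristic polynomial of the Jacobian matrix of F satisfies: at P₁ it equals (X − 3(γ−1))·(X − 3γ)·(X − (3γ−2)); at P₂ it equals (X − 2)·(X + 1)·(X − (2−3γ)); at P₃ it equals (X + 3)·(X + 2)·(X + 3γ); at P₄ it equals (X − 3)·(X − 1)·(X + 3(γ−1)). -/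
open Polynomial

lemma cons3_zero {α : Type*} (a b c : α) (h : 0 < 3) : ![a,b,c] ⟨0,h⟩ = a := rfl
lemma cons3_one {α : Type*} (a b c : α) (h : 1 < 3) : ![a,b,c] ⟨1,h⟩ = b := rfl
lemma cons3_two {α : Type*} (a b c : α) (h : 2 < 3) : ![a,b,c] ⟨2,h⟩ = c := rfl

lemma fin3_mk0 (h : 0 < 3) : (⟨0, h⟩ : Fin 3) = 0 := rfl
lemma fin3_mk1 (h : 1 < 3) : (⟨1, h⟩ : Fin 3) = 1 := rfl
lemma fin3_mk2 (h : 2 < 3) : (⟨2, h⟩ : Fin 3) = 2 := rfl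

lemma fder_key (a b c d : ℝ) (k : Fin 3) (x v : Fin 3 → ℝ) :
    fderiv ℝ (fun y : Fin 3 → ℝ => y k * (a * y 0 + b * y 1 + c * y 2 + d)) x v
      = v k * (a * x 0 + b * x 1 + c * x 2 + d)
        + x k * (a * v 0 + b * v 1 + c * v 2) := by
  have hk : HasFDerivAt (fun y : Fin 3 → ℝ => y k)
      (ContinuousLinearMap.proj k : (Fin 3 → ℝ) →L[ℝ] ℝ) x :=
    ((ContinuousLinearMap.proj k : (Fin 3 → ℝ) →L[ℝ] ℝ)).hasFDerivAt
  have h0 : HasFDerivAt (fun y : Fin 3 → ℝ => y 0)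
      (ContinuousLinearMap.proj 0 : (Fin 3 → ℝ) →L[ℝ] ℝ) x :=
    ((ContinuousLinearMap.proj 0 : (Fin 3 → ℝ) →L[ℝ] ℝ)).hasFDerivAt
  have h1 : HasFDerivAt (fun y : Fin 3 → ℝ => y 1)
      (ContinuousLinearMap.proj 1 : (Fin 3 → ℝ) →L[ℝ] ℝ) x :=
    ((ContinuousLinearMap.proj 1 : (Fin 3 → ℝ) →L[ℝ] ℝ)).hasFDerivAt
  have h2 : HasFDerivAt (fun y : Fin 3 → ℝ => y 2)
      (ContinuousLinearMap.proj 2 : (Fin 3 → ℝ) →L[ℝ] ℝ) x :=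
    ((ContinuousLinearMap.proj 2 : (Fin 3 → ℝ) →L[ℝ] ℝ)).hasFDerivAt
  have hg : HasFDerivAt (fun y : Fin 3 → ℝ => a * y 0 + b * y 1 + c * y 2 + d)
      (a • (ContinuousLinearMap.proj 0 : (Fin 3 → ℝ) →L[ℝ] ℝ)
        + b • ContinuousLinearMap.proj 1 + c • ContinuousLinearMap.proj 2) x :=
    (((h0.const_mul a).add (h1.const_mul b)).add (h2.const_mul c)).add_const d
  rw [show (fun y : Fin 3 → ℝ => y k * (a * y 0 + b * y 1 + c * y 2 + d)) = ((fun y : Fin 3 → ℝ => y k) * (fun y : Fin 3 → ℝ => a * y 0 + b * y 1 + c * y 2 + d)) from rfl, (hk.mul hg).fderiv]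
  simp [ContinuousLinearMap.proj]
  ring

/-- Table 1 of the paper: the guiding system of the time-averaged FLRW scalar-field
cosmology, with vector field
`F(Ω, Ωm, Ωk) = (Ω(3γΩm+3Ω+2Ωk−3), Ωm(3γ(Ωm−1)+3Ω+2Ωk), Ωk(3γΩm+3Ω+2Ωk−2))`,
has equilibrium points `P₁ = (0,1,0)`, `P₂ = (0,0,1)`, `P₃ = (0,0,0)`, `P₄ = (1,0,0)`,
and the characteristic polynomials of the Jacobian at these points are the stated
products of linear factors (recording the eigenvalues `{3(γ−1), 3γ, 3γ−2}`,
`{2, −1, 2−3γ}`, `{−3, −2, −3γ}`, `{3, 1, −3(γ−1)}`). -/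
theorem stmt11 (γ : ℝ) (F : (Fin 3 → ℝ) → (Fin 3 → ℝ))
    (hF : ∀ x, F x =
      ![x 0 * (3 * γ * x 1 + 3 * x 0 + 2 * x 2 - 3),
        x 1 * (3 * γ * (x 1 - 1) + 3 * x 0 + 2 * x 2),
        x 2 * (3 * γ * x 1 + 3 * x 0 + 2 * x 2 - 2)])
    (J : (Fin 3 → ℝ) → Matrix (Fin 3) (Fin 3) ℝ)
    (hJ : ∀ x i j, J x i j = fderiv ℝ (fun y => F y i) x (Pi.single j 1)) :
    F ![0, 1, 0] = 0 ∧ F ![0, 0, 1] = 0 ∧ F ![0, 0, 0] = 0 ∧ F ![1, 0, 0] = 0 ∧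
    (J ![0, 1, 0]).charpoly =
      (X - C (3 * (γ - 1))) * (X - C (3 * γ)) * (X - C (3 * γ - 2)) ∧
    (J ![0, 0, 1]).charpoly =
      (X - C 2) * (X + C 1) * (X - C (2 - 3 * γ)) ∧
    (J ![0, 0, 0]).charpoly =
      (X + C 3) * (X + C 2) * (X + C (3 * γ)) ∧
    (J ![1, 0, 0]).charpoly =
      (X - C 3) * (X - C 1) * (X + C (3 * (γ - 1))) := by
  have e : ∀ i : Fin 3, (fun y : Fin 3 → ℝ => F y i)
      = fun y : Fin 3 → ℝ =>
          y i * (3 * y 0 + (3 * γ) * y 1 + 2 * y 2 + ![(-3 : ℝ), -(3*γ), -2] i) := by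
    intro i; funext y; rw [hF]; fin_cases i <;>
      simp only [fin3_mk0, fin3_mk1, fin3_mk2, cons3_zero, cons3_one, cons3_two, Matrix.cons_val_zero, Matrix.cons_val_one, Matrix.head_cons, Matrix.cons_val_two, Matrix.tail_cons, Matrix.vecHead, Matrix.vecTail, Matrix.cons_val_succ, Function.comp_apply] <;> ring
  have hJ' : ∀ (x : Fin 3 → ℝ) (i j : Fin 3), J x i j =
      (Pi.single j 1 : Fin 3 → ℝ) i
          * (3 * x 0 + (3 * γ) * x 1 + 2 * x 2 + ![(-3 : ℝ), -(3*γ), -2] i)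
        + x i * (3 * (Pi.single j 1 : Fin 3 → ℝ) 0 + (3 * γ) * (Pi.single j 1 : Fin 3 → ℝ) 1
            + 2 * (Pi.single j 1 : Fin 3 → ℝ) 2) := by
    intro x i j; rw [hJ, e, fder_key]
  have M1 : J ![0, 1, 0] = !![3*γ-3, 0, 0; 3, 3*γ, 2; 0, 0, 3*γ-2] := by
    ext i j; fin_cases i <;> fin_cases j <;>
      simp [hJ', Pi.single_apply, fin3_mk0, fin3_mk1, fin3_mk2, cons3_zero, cons3_one, cons3_two, Matrix.cons_val_zero, Matrix.cons_val_one, Matrix.head_cons, Matrix.cons_val_two, Matrix.tail_cons, Matrix.vecHead, Matrix.vecTail, Matrix.cons_val_succ, Function.comp_apply] <;> ring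
  have M2 : J ![0, 0, 1] = !![(-1 : ℝ), 0, 0; 0, 2-3*γ, 0; 3, 3*γ, 2] := by
    ext i j; fin_cases i <;> fin_cases j <;>
      simp [hJ', Pi.single_apply, fin3_mk0, fin3_mk1, fin3_mk2, cons3_zero, cons3_one, cons3_two, Matrix.cons_val_zero, Matrix.cons_val_one, Matrix.head_cons, Matrix.cons_val_two, Matrix.tail_cons, Matrix.vecHead, Matrix.vecTail, Matrix.cons_val_succ, Function.comp_apply] <;> ring
  have M3 : J ![0, 0, 0] = !![(-3 : ℝ), 0, 0; 0, -(3*γ), 0; 0, 0, -2] := by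
    ext i j; fin_cases i <;> fin_cases j <;>
      simp [hJ', Pi.single_apply, fin3_mk0, fin3_mk1, fin3_mk2, cons3_zero, cons3_one, cons3_two, Matrix.cons_val_zero, Matrix.cons_val_one, Matrix.head_cons, Matrix.cons_val_two, Matrix.tail_cons, Matrix.vecHead, Matrix.vecTail, Matrix.cons_val_succ, Function.comp_apply] <;> ring
  have M4 : J ![1, 0, 0] = !![(3 : ℝ), 3*γ, 2; 0, 3-3*γ, 0; 0, 0, 1] := by
    ext i j; fin_cases i <;> fin_cases j <;>
      simp [hJ', Pi.single_apply, fin3_mk0, fin3_mk1, fin3_mk2, cons3_zero, cons3_one, cons3_two, Matrix.cons_val_zero, Matrix.cons_val_one, Matrix.head_cons, Matrix.cons_val_two, Matrix.tail_cons, Matrix.vecHead, Matrix.vecTail, Matrix.cons_val_succ, Function.comp_apply] <;> ring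
  refine ⟨?_, ?_, ?_, ?_, ?_, ?_, ?_, ?_⟩
  · funext i; rw [hF]; fin_cases i <;>
      simp only [fin3_mk0, fin3_mk1, fin3_mk2, cons3_zero, cons3_one, cons3_two, Matrix.cons_val_zero, Matrix.cons_val_one, Matrix.head_cons, Matrix.cons_val_two, Matrix.tail_cons, Pi.zero_apply] <;> ring
  · funext i; rw [hF]; fin_cases i <;>
      simp only [fin3_mk0, fin3_mk1, fin3_mk2, cons3_zero, cons3_one, cons3_two, Matrix.cons_val_zero, Matrix.cons_val_one, Matrix.head_cons, Matrix.cons_val_two, Matrix.tail_cons, Pi.zero_apply] <;> ring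
  · funext i; rw [hF]; fin_cases i <;>
      simp only [fin3_mk0, fin3_mk1, fin3_mk2, cons3_zero, cons3_one, cons3_two, Matrix.cons_val_zero, Matrix.cons_val_one, Matrix.head_cons, Matrix.cons_val_two, Matrix.tail_cons, Pi.zero_apply] <;> ring
  · funext i; rw [hF]; fin_cases i <;>
      simp only [fin3_mk0, fin3_mk1, fin3_mk2, cons3_zero, cons3_one, cons3_two, Matrix.cons_val_zero, Matrix.cons_val_one, Matrix.head_cons, Matrix.cons_val_two, Matrix.tail_cons, Pi.zero_apply] <;> ring
  · rw [M1, Matrix.charpoly, Matrix.det_fin_three]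
    simp only [Matrix.charmatrix_apply, Matrix.diagonal_apply, Matrix.cons_val', Matrix.cons_val_zero,
      Matrix.cons_val_one, Matrix.head_cons, Matrix.cons_val_two, Matrix.tail_cons,
      Matrix.empty_val', Matrix.cons_val_fin_one, Matrix.head_fin_const, Matrix.of_apply,
      map_sub, map_add, map_mul, map_neg, map_ofNat, map_one, map_zero,
      if_true, reduceIte, Fin.isValue, Fin.reduceEq]
    ring
  · rw [M2, Matrix.charpoly, Matrix.det_fin_three]
    simp only [Matrix.charmatrix_apply, Matrix.diagonal_apply, Matrix.cons_val', Matrix.cons_val_zero,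
      Matrix.cons_val_one, Matrix.head_cons, Matrix.cons_val_two, Matrix.tail_cons,
      Matrix.empty_val', Matrix.cons_val_fin_one, Matrix.head_fin_const, Matrix.of_apply,
      map_sub, map_add, map_mul, map_neg, map_ofNat, map_one, map_zero,
      if_true, reduceIte, Fin.isValue, Fin.reduceEq]
    ring
  · rw [M3, Matrix.charpoly, Matrix.det_fin_three]
    simp only [Matrix.charmatrix_apply, Matrix.diagonal_apply, Matrix.cons_val', Matrix.cons_val_zero,
      Matrix.cons_val_one, Matrix.head_cons, Matrix.cons_val_two, Matrix.tail_cons,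
      Matrix.empty_val', Matrix.cons_val_fin_one, Matrix.head_fin_const, Matrix.of_apply,
      map_sub, map_add, map_mul, map_neg, map_ofNat, map_one, map_zero,
      if_true, reduceIte, Fin.isValue, Fin.reduceEq]
    ring
  · rw [M4, Matrix.charpoly, Matrix.det_fin_three]
    simp only [Matrix.charmatrix_apply, Matrix.diagonal_apply, Matrix.cons_val', Matrix.cons_val_zero,
      Matrix.cons_val_one, Matrix.head_cons, Matrix.cons_val_two, Matrix.tail_cons,
      Matrix.empty_val', Matrix.cons_val_fin_one, Matrix.head_fin_const, Matrix.of_apply,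
      map_sub, map_add, map_mul, map_neg, map_ofNat, map_one, map_zero,
      if_true, reduceIte, Fin.isValue, Fin.reduceEq]
    ring
end

section
/- Fix γ ∈ ℝ and define G : ℝ³ → ℝ³ by G(Ω, Ωm, Σ) = ( Ω·(3(γΩm + Ω − 1) + 2Σ²), Ωm·(3γ(Ωm−1) + 2Σ² + 3Ω), (1/2)·Σ·(3(γΩm + Ω − 2) + 2Σ²) ). Then G(P) = 0 for P₁ = (0,1,0), P₂ = (1,0,0), P₃ = (0,0,−√3), P₄ = (0,0,√3), P₅ = (0,0,0), and the characteristic polynomial of the Jacobian matrix of G satisfies: at P₁ it equals (X − 3(γ−2)/2)·(X − 3(γ−1))·(X − 3γ); at P₂ it equals (X − 3)·(X + 3/2)·(X + 3(γ−1)); at P₃ and at P₄ it equals (X − 6)·(X − 3)·(X + 3(γ−2)); at P₅ it equals (X + 3)²·(X + 3γ). -/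
open Polynomial

noncomputable def pr (i : Fin 3) : (Fin 3 → ℝ) →L[ℝ] ℝ := ContinuousLinearMap.proj i
noncomputable def lc (a b c : ℝ) : (Fin 3 → ℝ) →L[ℝ] ℝ := a • pr 0 + b • pr 1 + c • pr 2

lemma lc_single (a b c : ℝ) (j : Fin 3) :
    lc a b c (Pi.single j 1) = ![a, b, c] j := by
  fin_cases j <;> simp [lc, pr, Pi.single_apply, Fin.ext_iff]

noncomputable def Mt (γ : ℝ) (x : Fin 3 → ℝ) : Matrix (Fin 3) (Fin 3) ℝ :=
  !![3 * γ * x 1 + 6 * x 0 - 3 + 2 * (x 2)^2, 3 * γ * x 0, 4 * x 0 * x 2;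
     3 * x 1, 6 * γ * x 1 - 3 * γ + 2 * (x 2)^2 + 3 * x 0, 4 * x 1 * x 2;
     (3/2) * x 2, (3/2) * γ * x 2, (1/2) * (3 * (γ * x 1 + x 0 - 2)) + 3 * (x 2)^2]

lemma hD0 (γ : ℝ) (x : Fin 3 → ℝ) :
    HasFDerivAt (fun y : Fin 3 → ℝ => y 0 * (3 * (γ * y 1 + y 0 - 1) + 2 * (y 2) ^ 2))
      (lc (Mt γ x 0 0) (Mt γ x 0 1) (Mt γ x 0 2)) x := by
  have h0 : HasFDerivAt (fun y : Fin 3 → ℝ => y 0) (pr 0) x := (pr 0).hasFDerivAt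
  have h1 : HasFDerivAt (fun y : Fin 3 → ℝ => y 1) (pr 1) x := (pr 1).hasFDerivAt
  have h2 : HasFDerivAt (fun y : Fin 3 → ℝ => y 2) (pr 2) x := (pr 2).hasFDerivAt
  simp only [pow_two]
  have h := h0.mul (((((h1.const_mul γ).add h0).sub_const 1).const_mul 3).add
    ((h2.mul h2).const_mul 2))
  refine h.congr_fderiv ?_
  ext v
  simp [lc, pr, Mt]
  ring

lemma hD1 (γ : ℝ) (x : Fin 3 → ℝ) :
    HasFDerivAt (fun y : Fin 3 → ℝ => y 1 * (3 * γ * (y 1 - 1) + 2 * (y 2) ^ 2 + 3 * y 0))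
      (lc (Mt γ x 1 0) (Mt γ x 1 1) (Mt γ x 1 2)) x := by
  have h0 : HasFDerivAt (fun y : Fin 3 → ℝ => y 0) (pr 0) x := (pr 0).hasFDerivAt
  have h1 : HasFDerivAt (fun y : Fin 3 → ℝ => y 1) (pr 1) x := (pr 1).hasFDerivAt
  have h2 : HasFDerivAt (fun y : Fin 3 → ℝ => y 2) (pr 2) x := (pr 2).hasFDerivAt
  simp only [pow_two]
  have h := h1.mul ((((h1.sub_const 1).const_mul (3*γ)).add
    ((h2.mul h2).const_mul 2)).add (h0.const_mul 3))
  refine h.congr_fderiv ?_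
  ext v
  simp [lc, pr, Mt]
  ring

lemma hD2 (γ : ℝ) (x : Fin 3 → ℝ) :
    HasFDerivAt (fun y : Fin 3 → ℝ => (1/2) * y 2 * (3 * (γ * y 1 + y 0 - 2) + 2 * (y 2) ^ 2))
      (lc (Mt γ x 2 0) (Mt γ x 2 1) (Mt γ x 2 2)) x := by
  have h0 : HasFDerivAt (fun y : Fin 3 → ℝ => y 0) (pr 0) x := (pr 0).hasFDerivAt
  have h1 : HasFDerivAt (fun y : Fin 3 → ℝ => y 1) (pr 1) x := (pr 1).hasFDerivAt
  have h2 : HasFDerivAt (fun y : Fin 3 → ℝ => y 2) (pr 2) x := (pr 2).hasFDerivAt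
  simp only [pow_two]
  have h := (h2.const_mul (1/2)).mul (((((h1.const_mul γ).add h0).sub_const 2).const_mul 3).add
    ((h2.mul h2).const_mul 2))
  refine h.congr_fderiv ?_
  ext v
  simp [lc, pr, Mt]
  ring


lemma cp3 (a p q b e f c : ℝ) :
    (!![a, p, 0; q, b, 0; e, f, c] : Matrix (Fin 3) (Fin 3) ℝ).charpoly =
      ((X - C a) * (X - C b) - C (p * q)) * (X - C c) := by
  rw [Matrix.charpoly, Matrix.det_fin_three]
  simp [Matrix.charmatrix_apply_eq, Matrix.charmatrix_apply_ne, Fin.ext_iff, map_mul]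
  ring

/-- Table 2 of the paper: the guiding system of the time-averaged Bianchi I scalar-field
cosmology, with vector field
`G(Ω, Ωm, Σ) = (Ω(3(γΩm+Ω−1)+2Σ²), Ωm(3γ(Ωm−1)+2Σ²+3Ω), (1/2)Σ(3(γΩm+Ω−2)+2Σ²))`,
has equilibrium points `P₁ = (0,1,0)`, `P₂ = (1,0,0)`, `P₃ = (0,0,−√3)`, `P₄ = (0,0,√3)`,
`P₅ = (0,0,0)`, with the stated characteristic polynomials of the Jacobian, recording the
eigenvalues `{3(γ−2)/2, 3(γ−1), 3γ}`, `{3, −3/2, −3(γ−1)}`, `{6, 3, −3(γ−2)}` (at both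
`P₃` and `P₄`), `{−3, −3, −3γ}`. -/
theorem stmt12 (γ : ℝ) (G : (Fin 3 → ℝ) → (Fin 3 → ℝ))
    (hG : ∀ x, G x =
      ![x 0 * (3 * (γ * x 1 + x 0 - 1) + 2 * (x 2) ^ 2),
        x 1 * (3 * γ * (x 1 - 1) + 2 * (x 2) ^ 2 + 3 * x 0),
        (1 / 2) * x 2 * (3 * (γ * x 1 + x 0 - 2) + 2 * (x 2) ^ 2)])
    (J : (Fin 3 → ℝ) → Matrix (Fin 3) (Fin 3) ℝ)
    (hJ : ∀ x i j, J x i j = fderiv ℝ (fun y => G y i) x (Pi.single j 1)) :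
    G ![0, 1, 0] = 0 ∧ G ![1, 0, 0] = 0 ∧ G ![0, 0, -Real.sqrt 3] = 0 ∧
    G ![0, 0, Real.sqrt 3] = 0 ∧ G ![0, 0, 0] = 0 ∧
    (J ![0, 1, 0]).charpoly =
      (X - C (3 * (γ - 2) / 2)) * (X - C (3 * (γ - 1))) * (X - C (3 * γ)) ∧
    (J ![1, 0, 0]).charpoly =
      (X - C 3) * (X + C (3 / 2)) * (X + C (3 * (γ - 1))) ∧
    (J ![0, 0, -Real.sqrt 3]).charpoly =
      (X - C 6) * (X - C 3) * (X + C (3 * (γ - 2))) ∧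
    (J ![0, 0, Real.sqrt 3]).charpoly =
      (X - C 6) * (X - C 3) * (X + C (3 * (γ - 2))) ∧
    (J ![0, 0, 0]).charpoly =
      (X + C 3) ^ 2 * (X + C (3 * γ)) := by
  have r0 : ∀ x (j : Fin 3), J x 0 j = Mt γ x 0 j := by
    intro x j
    rw [hJ]
    have e : (fun y => G y (0 : Fin 3)) =
        fun y : Fin 3 → ℝ => y 0 * (3 * (γ * y 1 + y 0 - 1) + 2 * (y 2) ^ 2) :=
        funext fun y => by rw [hG]; rfl
    rw [e, (hD0 γ x).fderiv, lc_single]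
    fin_cases j <;> rfl
  have r1 : ∀ x (j : Fin 3), J x 1 j = Mt γ x 1 j := by
    intro x j
    rw [hJ]
    have e : (fun y => G y (1 : Fin 3)) =
        fun y : Fin 3 → ℝ => y 1 * (3 * γ * (y 1 - 1) + 2 * (y 2) ^ 2 + 3 * y 0) :=
        funext fun y => by rw [hG]; rfl
    rw [e, (hD1 γ x).fderiv, lc_single]
    fin_cases j <;> rfl
  have r2 : ∀ x (j : Fin 3), J x 2 j = Mt γ x 2 j := by
    intro x j
    rw [hJ]
    have e : (fun y => G y (2 : Fin 3)) =
        fun y : Fin 3 → ℝ => (1/2) * y 2 * (3 * (γ * y 1 + y 0 - 2) + 2 * (y 2) ^ 2) :=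
        funext fun y => by rw [hG]; rfl
    rw [e, (hD2 γ x).fderiv, lc_single]
    fin_cases j <;> rfl
  have hJ' : ∀ x, J x = Mt γ x := by
    intro x
    ext i j
    fin_cases i
    · exact r0 x j
    · exact r1 x j
    · exact r2 x j
  have hs3 : Real.sqrt 3 ^ 2 = 3 := Real.sq_sqrt (by norm_num)
  have m1 : Mt γ ![0, 1, 0] = !![3*(γ-1), 0, 0; 3, 3*γ, 0; 0, 0, 3*(γ-2)/2] := by
    ext i j; fin_cases i <;> fin_cases j <;> (simp [Mt]; try ring)
  have m2 : Mt γ ![1, 0, 0] = !![3, 3*γ, 0; 0, -(3*(γ-1)), 0; 0, 0, -(3/2)] := by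
    ext i j; fin_cases i <;> fin_cases j <;> (simp [Mt]; try ring)
  have m3 : Mt γ ![0, 0, -Real.sqrt 3] =
      !![3, 0, 0; 0, -(3*(γ-2)), 0; 3/2 * -Real.sqrt 3, 3/2*γ * -Real.sqrt 3, 6] := by
    ext i j; fin_cases i <;> fin_cases j <;> (simp [Mt, hs3]; try ring)
  have m4 : Mt γ ![0, 0, Real.sqrt 3] =
      !![3, 0, 0; 0, -(3*(γ-2)), 0; 3/2 * Real.sqrt 3, 3/2*γ * Real.sqrt 3, 6] := by
    ext i j; fin_cases i <;> fin_cases j <;> (simp [Mt, hs3]; try ring)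
  have m5 : Mt γ ![0, 0, 0] = !![-3, 0, 0; 0, -(3*γ), 0; 0, 0, -3] := by
    ext i j; fin_cases i <;> fin_cases j <;> (simp [Mt]; try ring)
  refine ⟨?_, ?_, ?_, ?_, ?_, ?_, ?_, ?_, ?_, ?_⟩
  · funext k; fin_cases k <;> simp [hG]
  · funext k; fin_cases k <;> simp [hG]
  · funext k; fin_cases k <;> simp [hG, hs3] <;> norm_num
  · funext k; fin_cases k <;> simp [hG, hs3] <;> norm_num
  · funext k; fin_cases k <;> simp [hG]
  · rw [hJ', m1, cp3]; simp [map_neg]; ring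
  · rw [hJ', m2, cp3]; simp [map_neg]; ring
  · rw [hJ', m3, cp3]; simp [map_neg]; ring
  · rw [hJ', m4, cp3]; simp [map_neg]; ring
  · rw [hJ', m5, cp3]; simp [map_neg]; ring
end

section
/- There exists a constant C > 0 such that for all ε ∈ (0, 1] and all t ∈ [0, 1/ε]: | 2·e^{−εt/2}·sin((t/2)·√(4−ε²)) / √(4−ε²) − e^{−εt/2}·sin(t) | ≤ C·ε. -/
open Real

set_option maxHeartbeats 1000000 in
/-- Example 2, two-timing error estimate: the multiple-scales approximation
`e^{−εt/2} sin t` of the exact solution of `y'' + εy' + y = 0`, `y(0) = 0`, `y'(0) = 1`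
is accurate to `O(ε)` uniformly on time scales of order `1/ε`. -/
theorem stmt17 : ∃ C > (0:ℝ), ∀ ε ∈ Set.Ioc (0:ℝ) 1, ∀ t ∈ Set.Icc (0:ℝ) (1 / ε),
    |2 * Real.exp (-ε * t / 2) * Real.sin (t / 2 * Real.sqrt (4 - ε ^ 2)) /
        Real.sqrt (4 - ε ^ 2) -
      Real.exp (-ε * t / 2) * Real.sin t| ≤ C * ε := by
  refine ⟨1, one_pos, ?_⟩
  rintro ε ⟨hε0, hε1⟩ t ⟨ht0, ht1⟩
  set s := Real.sqrt (4 - ε ^ 2) with hs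
  have h4 : (0:ℝ) ≤ 4 - ε ^ 2 := by nlinarith
  have hsq : s ^ 2 = 4 - ε ^ 2 := Real.sq_sqrt h4
  have hsnn : 0 ≤ s := Real.sqrt_nonneg _
  have hs1 : 1 ≤ s := by nlinarith
  have hs2 : s ≤ 2 := by nlinarith
  have hspos : 0 < s := lt_of_lt_of_le one_pos hs1
  have hE1 : Real.exp (-ε * t / 2) ≤ 1 := by
    rw [Real.exp_le_one_iff]; nlinarith
  have hEpos : 0 < Real.exp (-ε * t / 2) := Real.exp_pos _
  set a := t / 2 * s with ha
  have hsin1 : |Real.sin a| ≤ 1 := Real.abs_sin_le_one a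
  have hlip : |Real.sin a - Real.sin t| ≤ |a - t| := by
    rw [Real.sin_sub_sin, abs_mul, abs_mul]
    have h1 := Real.abs_sin_le_abs (x := (a - t) / 2)
    have h2 := Real.abs_cos_le_one ((a + t) / 2)
    have h3 : |(a - t) / 2| = |a - t| / 2 := by rw [abs_div]; norm_num
    have h4 : |(2:ℝ)| = 2 := by norm_num
    have h5 : |(2:ℝ)| * |Real.sin ((a - t) / 2)| * |Real.cos ((a + t) / 2)|
        ≤ 2 * (|a - t| / 2) * 1 := by
      rw [h4, ← h3]; gcongr
    linarith
  have hat : |a - t| = t * (2 - s) / 2 := by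
    rw [abs_of_nonpos (by nlinarith)]; ring
  have hu : (2 - s) * (2 + s) = ε ^ 2 := by nlinarith
  have hu3 : 2 - s ≤ ε ^ 2 / 3 := by
    rw [le_div_iff₀ (by norm_num : (0:ℝ) < 3)]; nlinarith
  have htinv : t * ε ≤ 1 := by
    have := (le_div_iff₀ hε0).mp ht1
    linarith
  have ht2 : t * (2 - s) / 2 ≤ ε / 6 := by
    have h1 : t * (2 - s) ≤ t * (ε ^ 2 / 3) := by
      apply mul_le_mul_of_nonneg_left hu3 ht0
    have h2 : t * (ε ^ 2 / 3) ≤ ε / 3 := by nlinarith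
    linarith
  have key : |2 * Real.sin a / s - Real.sin t| ≤ ε := by
    have heq : 2 * Real.sin a / s - Real.sin t
        = (2 - s) / s * Real.sin a + (Real.sin a - Real.sin t) := by
      field_simp; ring
    rw [heq]
    have h1 : |(2 - s) / s * Real.sin a| ≤ (2 - s) / s := by
      rw [abs_mul, abs_of_nonneg (div_nonneg (by linarith) hsnn)]
      exact mul_le_of_le_one_right (div_nonneg (by linarith) hsnn) hsin1
    have h2 : (2 - s) / s ≤ 2 - s := by
      rw [div_le_iff₀ hspos]; nlinarith
    have h3 : ε ^ 2 / 3 ≤ ε / 3 := by nlinarith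
    calc |(2 - s) / s * Real.sin a + (Real.sin a - Real.sin t)|
        ≤ |(2 - s) / s * Real.sin a| + |Real.sin a - Real.sin t| := abs_add_le _ _
      _ ≤ (2 - s) + t * (2 - s) / 2 := by
          have := hlip.trans_eq hat
          linarith
      _ ≤ ε / 3 + ε / 6 := by linarith
      _ ≤ ε := by linarith
  have hfac : 2 * Real.exp (-ε * t / 2) * Real.sin a / s - Real.exp (-ε * t / 2) * Real.sin t
      = Real.exp (-ε * t / 2) * (2 * Real.sin a / s - Real.sin t) := by ring
  rw [hfac, abs_mul, abs_of_pos hEpos, one_mul]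
  calc Real.exp (-ε * t / 2) * |2 * Real.sin a / s - Real.sin t|
      ≤ 1 * ε := by
        apply mul_le_mul hE1 key (abs_nonneg _) zero_le_one
    _ = ε := one_mul ε
end

section
/- Let γ ≥ 0 with γ² < 6, U₀ > 0, and c₁, c₂, c₃ ∈ ℝ. Define Δ(t) = √(6−γ²)·√U₀·(24c₁ + t)/(2√2), u₀(t) = c₂ − 2·ln(cosh Δ(t))/(√6·γ − 6), and v₀(t) = c₃ + 2·ln(sinh Δ(t))/(√6·γ + 6). Then for all t with Δ(t) > 0: (i) 12·(√6·γ − 6)·(u₀'(t))² − 24·u₀''(t) + (√6·γ + 6)·U₀ = 0; (ii) −12·(√6·γ + 6)·(v₀'(t))² − 24·v₀''(t) + (6 − √6·γ)·U₀ = 0; (iii) u₀'(t)·v₀'(t) = U₀/12. -/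
open Real

/-- Example 3 (induced gravity), order-`O(1)` solution for `γ² < 6`: with
`Δ(t) = √(6−γ²)√U₀(24c₁+t)/(2√2)`, the functions
`u₀ = c₂ − 2 ln(cosh Δ)/(√6γ−6)` and `v₀ = c₃ + 2 ln(sinh Δ)/(√6γ+6)` satisfy the two
Raychaudhuri-type equations and the Friedmann constraint `u₀'·v₀' = U₀/12` wherever
`Δ(t) > 0`. -/
theorem stmt18 (γ U₀ c₁ c₂ c₃ : ℝ) (hγ : 0 ≤ γ) (hγ6 : γ ^ 2 < 6) (hU : 0 < U₀)
    (Δ u₀ v₀ : ℝ → ℝ)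
    (hΔ : ∀ t, Δ t = Real.sqrt (6 - γ ^ 2) * Real.sqrt U₀ * (24 * c₁ + t) / (2 * Real.sqrt 2))
    (hu : ∀ t, u₀ t = c₂ - 2 * Real.log (Real.cosh (Δ t)) / (Real.sqrt 6 * γ - 6))
    (hv : ∀ t, v₀ t = c₃ + 2 * Real.log (Real.sinh (Δ t)) / (Real.sqrt 6 * γ + 6)) :
    ∀ t, 0 < Δ t →
      12 * (Real.sqrt 6 * γ - 6) * (deriv u₀ t) ^ 2 - 24 * deriv (deriv u₀) t +
        (Real.sqrt 6 * γ + 6) * U₀ = 0 ∧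
      -12 * (Real.sqrt 6 * γ + 6) * (deriv v₀ t) ^ 2 - 24 * deriv (deriv v₀) t +
        (6 - Real.sqrt 6 * γ) * U₀ = 0 ∧
      deriv u₀ t * deriv v₀ t = U₀ / 12 := by
  have hs6sq : Real.sqrt 6 ^ 2 = 6 := Real.sq_sqrt (by norm_num)
  have hs6nn : (0:ℝ) ≤ Real.sqrt 6 := Real.sqrt_nonneg 6
  have ha : Real.sqrt 6 * γ - 6 < 0 := by nlinarith
  have hb : (0:ℝ) < Real.sqrt 6 * γ + 6 := by nlinarith
  set s6 := Real.sqrt 6 with hs6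
  set a := s6 * γ - 6 with haa
  set b := s6 * γ + 6 with hbb
  set k := Real.sqrt (6 - γ ^ 2) * Real.sqrt U₀ / (2 * Real.sqrt 2) with hkk
  have hk2 : k ^ 2 = (6 - γ ^ 2) * U₀ / 8 := by
    rw [hkk, div_pow, mul_pow, mul_pow,
      Real.sq_sqrt (by nlinarith : (0:ℝ) ≤ 6 - γ ^ 2), Real.sq_sqrt hU.le,
      Real.sq_sqrt (by norm_num : (0:ℝ) ≤ 2)]
    norm_num
  have hΔeq : Δ = fun s => k * (24 * c₁ + s) := by
    funext s; rw [hΔ s, hkk]; ring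
  have hΔd : ∀ s, HasDerivAt Δ k s := by
    rw [hΔeq]; intro s
    simpa using ((hasDerivAt_id s).const_add (24 * c₁)).const_mul k
  have hC : ∀ s, HasDerivAt (fun s => Real.cosh (Δ s)) (Real.sinh (Δ s) * k) s :=
    fun s => (Real.hasDerivAt_cosh (Δ s)).comp s (hΔd s)
  have hS : ∀ s, HasDerivAt (fun s => Real.sinh (Δ s)) (Real.cosh (Δ s) * k) s :=
    fun s => (Real.hasDerivAt_sinh (Δ s)).comp s (hΔd s)
  have hu' : u₀ = fun s => c₂ - 2 * Real.log (Real.cosh (Δ s)) / a := funext hu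
  have hv' : v₀ = fun s => c₃ + 2 * Real.log (Real.sinh (Δ s)) / b := funext hv
  have hud : ∀ s, HasDerivAt u₀
      (-(2 * k / a) * (Real.sinh (Δ s) / Real.cosh (Δ s))) s := by
    intro s
    have hl := (Real.hasDerivAt_log (Real.cosh_pos (x := Δ s)).ne').comp s (hC s)
    have h := ((hl.const_mul 2).div_const a).const_sub c₂
    rw [hu']
    refine h.congr_deriv ?_
    field_simp
  have du : ∀ s, deriv u₀ s = -(2 * k / a) * (Real.sinh (Δ s) / Real.cosh (Δ s)) :=
    fun s => (hud s).deriv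
  have hvd : ∀ s, 0 < Δ s → HasDerivAt v₀
      ((2 * k / b) * (Real.cosh (Δ s) / Real.sinh (Δ s))) s := by
    intro s hs
    have hl := (Real.hasDerivAt_log (Real.sinh_pos_iff.mpr hs).ne').comp s (hS s)
    have h := ((hl.const_mul 2).div_const b).const_add c₃
    rw [hv']
    refine h.congr_deriv ?_
    field_simp
  have dv : ∀ s, 0 < Δ s →
      deriv v₀ s = (2 * k / b) * (Real.cosh (Δ s) / Real.sinh (Δ s)) :=
    fun s hs => (hvd s hs).deriv
  intro t ht
  have hCp : (0:ℝ) < Real.cosh (Δ t) := Real.cosh_pos (Δ t)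
  have hSp : (0:ℝ) < Real.sinh (Δ t) := Real.sinh_pos_iff.mpr ht
  have hid : Real.cosh (Δ t) ^ 2 - Real.sinh (Δ t) ^ 2 = 1 := Real.cosh_sq_sub_sinh_sq (Δ t)
  -- second derivative of u₀
  have hq : HasDerivAt (fun s => Real.sinh (Δ s) / Real.cosh (Δ s))
      ((Real.cosh (Δ t) * k * Real.cosh (Δ t) -
        Real.sinh (Δ t) * (Real.sinh (Δ t) * k)) / Real.cosh (Δ t) ^ 2) t :=
    (hS t).div (hC t) (Real.cosh_pos (Δ t)).ne'
  have du2 : deriv (deriv u₀) t = -(2 * k / a) *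
      ((Real.cosh (Δ t) * k * Real.cosh (Δ t) -
        Real.sinh (Δ t) * (Real.sinh (Δ t) * k)) / Real.cosh (Δ t) ^ 2) := by
    have : deriv u₀ = fun s => -(2 * k / a) * (Real.sinh (Δ s) / Real.cosh (Δ s)) :=
      funext du
    rw [this]
    exact (hq.const_mul _).deriv
  -- second derivative of v₀
  have hev : ∀ᶠ s in nhds t, 0 < Δ s :=
    (hΔd t).continuousAt.preimage_mem_nhds (Ioi_mem_nhds ht)
  have heq : deriv v₀ =ᶠ[nhds t]
      fun s => (2 * k / b) * (Real.cosh (Δ s) / Real.sinh (Δ s)) :=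
    hev.mono fun s hs => dv s hs
  have hqv : HasDerivAt (fun s => Real.cosh (Δ s) / Real.sinh (Δ s))
      ((Real.sinh (Δ t) * k * Real.sinh (Δ t) -
        Real.cosh (Δ t) * (Real.cosh (Δ t) * k)) / Real.sinh (Δ t) ^ 2) t :=
    (hC t).div (hS t) hSp.ne'
  have dv2 : deriv (deriv v₀) t = (2 * k / b) *
      ((Real.sinh (Δ t) * k * Real.sinh (Δ t) -
        Real.cosh (Δ t) * (Real.cosh (Δ t) * k)) / Real.sinh (Δ t) ^ 2) := by
    rw [heq.deriv_eq]
    exact (hqv.const_mul _).deriv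
  rw [du t, dv t ht, du2, dv2]
  set C := Real.cosh (Δ t) with hCdef
  set S := Real.sinh (Δ t) with hSdef
  have hC0 : C ≠ 0 := hCp.ne'
  have hS0 : S ≠ 0 := hSp.ne'
  have ha0 : a ≠ 0 := ha.ne
  have hb0 : b ≠ 0 := hb.ne'
  have h48 : 48 * k ^ 2 = 6 * (6 - γ ^ 2) * U₀ := by linear_combination 48 * hk2
  have hab : a * b = -(6 * (6 - γ ^ 2)) := by
    rw [haa, hbb]; linear_combination γ ^ 2 * hs6sq
  have h6b : (6 - s6 * γ) * b = 6 * (6 - γ ^ 2) := by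
    rw [hbb]; linear_combination (-γ ^ 2) * hs6sq
  refine ⟨?_, ?_, ?_⟩
  · have e1 : 12 * a * (-(2 * k / a) * (S / C)) ^ 2 -
        24 * (-(2 * k / a) * ((C * k * C - S * (S * k)) / C ^ 2)) + b * U₀
        = (48 * k ^ 2 * S ^ 2 + 48 * k ^ 2 * (C ^ 2 - S ^ 2) + a * b * U₀ * C ^ 2) /
          (a * C ^ 2) := by
      field_simp
      ring
    rw [e1, div_eq_zero_iff]
    left
    linear_combination C ^ 2 * h48 + U₀ * C ^ 2 * hab
  · have e2 : -12 * b * (2 * k / b * (C / S)) ^ 2 -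
        24 * (2 * k / b * ((S * k * S - C * (C * k)) / S ^ 2)) + (6 - s6 * γ) * U₀
        = (48 * k ^ 2 * (C ^ 2 - S ^ 2) - 48 * k ^ 2 * C ^ 2 + (6 - s6 * γ) * U₀ * b * S ^ 2) /
          (b * S ^ 2) := by
      field_simp
      ring
    rw [e2, div_eq_zero_iff]
    left
    linear_combination (-S ^ 2) * h48 + U₀ * S ^ 2 * h6b
  · have e3 : -(2 * k / a) * (S / C) * (2 * k / b * (C / S)) = -4 * k ^ 2 / (a * b) := by
      field_simp
      ring
    rw [e3, div_eq_div_iff (mul_ne_zero ha0 hb0) (by norm_num : (12:ℝ) ≠ 0)]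
    linear_combination (-48) * hk2 + (-U₀) * hab
end
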